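/- Let Γ be a bounded measurable subset of ℝ², k ∈ L^∞(Γ × Γ) nonnegative and symmetric, and K the associated integral operator. If (w_n) converges to w weakly in L¹(Γ), then for every 1 ≤ p < ∞, (K w_n) converges to K w strongly in L^p(Γ). -/

import Mathlib

open MeasureTheory Filter

/-- If `wₙ ⇀ w` weakly in `L¹(Γ)`, then `K wₙ → K w` strongly in `L^p(Γ)` for every
`1 ≤ p < ∞`. -/
theorem stmt2
    (Γ : Set (EuclideanSpace ℝ (Fin 2)))
    (hΓm : MeasurableSet Γ) (hΓb : Bornology.IsBounded Γ)
    (k : EuclideanSpace ℝ (Fin 2) → EuclideanSpace ℝ (Fin 2) → ℝ)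
    (hk_meas : Measurable (Function.uncurry k))
    (hk_nonneg : ∀ x y, 0 ≤ k x y)
    (hk_symm : ∀ x y, k x y = k y x)
    (M : ℝ) (hk_bdd : ∀ x y, k x y ≤ M)
    (K : (EuclideanSpace ℝ (Fin 2) → ℝ) → EuclideanSpace ℝ (Fin 2) → ℝ)
    (hK : ∀ w x, K w x = ∫ y in Γ, k x y * w y)
    (w : ℕ → EuclideanSpace ℝ (Fin 2) → ℝ) (w₀ : EuclideanSpace ℝ (Fin 2) → ℝ)
    (hw : ∀ n, IntegrableOn (w n) Γ) (hw₀ : IntegrableOn w₀ Γ)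
    -- weak convergence in `L¹(Γ)`: testing against every bounded measurable `φ`
    (hweak : ∀ φ : EuclideanSpace ℝ (Fin 2) → ℝ, Measurable φ →
      (∃ Cφ : ℝ, ∀ x, |φ x| ≤ Cφ) →
      Tendsto (fun n => ∫ x in Γ, w n x * φ x) atTop (nhds (∫ x in Γ, w₀ x * φ x))) :
    ∀ p : ℝ, 1 ≤ p →
      Tendsto (fun n => ∫ x in Γ, |K (w n) x - K w₀ x| ^ p) atTop (nhds 0) := by
  intro p hp
  have hp0 : 0 < p := lt_of_lt_of_le zero_lt_one hp
  have hM0 : 0 ≤ M := le_trans (hk_nonneg 0 0) (hk_bdd 0 0)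
  set μ := (volume : Measure (EuclideanSpace ℝ (Fin 2))).restrict Γ with hμdef
  haveI : IsFiniteMeasure μ := by
    constructor
    rw [hμdef, Measure.restrict_apply_univ]
    exact hΓb.measure_lt_top
  haveI : Fact ((1 : ENNReal) ≤ ⊤) := ⟨le_top⟩
  have hwμ : ∀ n, Integrable (w n) μ := fun n => hw n
  have hw₀μ : Integrable w₀ μ := hw₀
  -- a.e. bound for elements of `L^∞(μ)`
  have hbd : ∀ φ : Lp ℝ ⊤ μ, ∀ᵐ x ∂μ, ‖φ x‖ ≤ ‖φ‖ := by
    intro φ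
    have h1 : ∀ᵐ x ∂μ, (‖φ x‖₊ : ENNReal) ≤ eLpNormEssSup (φ : _ → ℝ) μ :=
      ae_le_eLpNormEssSup
    have hfin : eLpNormEssSup (φ : _ → ℝ) μ ≠ ⊤ := by
      rw [← eLpNorm_exponent_top]; exact Lp.eLpNorm_ne_top φ
    filter_upwards [h1] with x hx
    rw [Lp.norm_def, eLpNorm_exponent_top]
    have h2 := ENNReal.toReal_mono hfin hx
    simpa using h2
  -- integrability of products with `L^∞` functions
  have hint : ∀ v : EuclideanSpace ℝ (Fin 2) → ℝ, Integrable v μ → ∀ φ : Lp ℝ ⊤ μ,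
      Integrable (fun x => v x * φ x) μ := by
    intro v hv φ
    have h := hv.bdd_mul (Lp.aestronglyMeasurable φ) (hbd φ)
    refine h.congr (Eventually.of_forall fun x => mul_comm _ _)
  -- the functionals `φ ↦ ∫ wₙ φ` on `L^∞(μ)`
  let T : ℕ → Lp ℝ ⊤ μ →L[ℝ] ℝ := fun n =>
    LinearMap.mkContinuous
      { toFun := fun φ => ∫ x, w n x * φ x ∂μ
        map_add' := by
          intro φ ψ
          have h1 : ∫ x, w n x * (φ + ψ : Lp ℝ ⊤ μ) x ∂μ
              = ∫ x, (w n x * φ x + w n x * ψ x) ∂μ := by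
            refine integral_congr_ae ?_
            filter_upwards [Lp.coeFn_add φ ψ] with x hx
            rw [hx]; simp [mul_add]
          show ∫ x, w n x * (φ + ψ : Lp ℝ ⊤ μ) x ∂μ
              = (∫ x, w n x * φ x ∂μ) + ∫ x, w n x * ψ x ∂μ
          rw [h1, integral_add (hint _ (hwμ n) φ) (hint _ (hwμ n) ψ)]
        map_smul' := by
          intro c φ
          have h1 : ∫ x, w n x * (c • φ : Lp ℝ ⊤ μ) x ∂μ
              = ∫ x, c * (w n x * φ x) ∂μ := by
            refine integral_congr_ae ?_
            filter_upwards [Lp.coeFn_smul c φ] with x hx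
            rw [hx]; simp [smul_eq_mul]; ring
          show ∫ x, w n x * (c • φ : Lp ℝ ⊤ μ) x ∂μ = c • ∫ x, w n x * φ x ∂μ
          rw [h1, integral_const_mul]; rfl }
      (∫ x, ‖w n x‖ ∂μ)
      (by
        intro φ
        simp only [LinearMap.coe_mk, AddHom.coe_mk]
        calc ‖∫ x, w n x * φ x ∂μ‖ ≤ ∫ x, ‖w n x * φ x‖ ∂μ :=
              norm_integral_le_integral_norm _
          _ ≤ ∫ x, ‖w n x‖ * ‖φ‖ ∂μ := by
              refine integral_mono_ae (hint _ (hwμ n) φ).norm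
                ((hwμ n).norm.mul_const _) ?_
              filter_upwards [hbd φ] with x hx
              rw [norm_mul]
              exact mul_le_mul_of_nonneg_left hx (norm_nonneg _)
          _ = (∫ x, ‖w n x‖ ∂μ) * ‖φ‖ := by rw [integral_mul_const])
  have hT_apply : ∀ n (φ : Lp ℝ ⊤ μ), T n φ = ∫ x, w n x * φ x ∂μ := fun n φ => rfl
  -- Banach–Steinhaus: pointwise bounds
  have hptbdd : ∀ φ : Lp ℝ ⊤ μ, ∃ C, ∀ n, ‖T n φ‖ ≤ C := by
    intro φ
    obtain ⟨g, hg1, hg2⟩ := Lp.aestronglyMeasurable φ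
    have hgmeas : Measurable g := hg1.measurable
    set C₀ := ‖φ‖ with hC₀
    have hC₀0 : (0 : ℝ) ≤ C₀ := norm_nonneg _
    have hψmeas : Measurable (fun x => max (-C₀) (min C₀ (g x))) :=
      measurable_const.max (measurable_const.min hgmeas)
    have hψbdd : ∀ x, |max (-C₀) (min C₀ (g x))| ≤ C₀ := by
      intro x
      rw [abs_le]
      constructor
      · exact le_max_left _ _
      · exact max_le (by linarith) (min_le_left _ _)
    have hψae : (φ : _ → ℝ) =ᵐ[μ] (fun x => max (-C₀) (min C₀ (g x))) := by
      filter_upwards [hg2, hbd φ] with x hx hx'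
      rw [hx] at hx' ⊢
      rw [Real.norm_eq_abs, abs_le] at hx'
      rw [min_eq_right hx'.2, max_eq_right hx'.1]
    have heq : ∀ v : EuclideanSpace ℝ (Fin 2) → ℝ, Integrable v μ →
        ∫ x in Γ, v x * max (-C₀) (min C₀ (g x)) = ∫ x, v x * φ x ∂μ := by
      intro v hv
      refine integral_congr_ae ?_
      filter_upwards [hψae] with x hx
      rw [hx]
    have hconv := hweak (fun x => max (-C₀) (min C₀ (g x))) hψmeas ⟨C₀, hψbdd⟩
    rw [heq w₀ hw₀μ] at hconv
    have hconv' : Tendsto (fun n => T n φ) atTop (nhds (∫ x, w₀ x * φ x ∂μ)) := by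
      refine hconv.congr fun n => ?_
      rw [heq (w n) (hwμ n), hT_apply]
    have hbdd := Metric.isBounded_range_of_tendsto _ hconv'
    rw [Metric.isBounded_iff_subset_closedBall 0] at hbdd
    obtain ⟨r, hr⟩ := hbdd
    refine ⟨r, fun n => ?_⟩
    have := hr (Set.mem_range_self n)
    simpa [Real.norm_eq_abs, abs_sub_comm] using this
  obtain ⟨C, hC⟩ := banach_steinhaus hptbdd
  have hC0 : (0 : ℝ) ≤ C := le_trans (norm_nonneg _) (hC 0)
  -- each `k x ·` is in `L^∞`
  have hkx_meas : ∀ x, Measurable (fun y => k x y) :=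
    fun x => hk_meas.comp measurable_prodMk_left
  have hkx_bdd : ∀ x y, ‖k x y‖ ≤ M := by
    intro x y
    rw [Real.norm_eq_abs, abs_of_nonneg (hk_nonneg x y)]
    exact hk_bdd x y
  have hkmem : ∀ x, MemLp (fun y => k x y) ⊤ μ := fun x =>
    memLp_top_of_bound (hkx_meas x).aestronglyMeasurable M
      (Eventually.of_forall fun y => hkx_bdd x y)
  have hknorm : ∀ x, ‖(hkmem x).toLp (fun y => k x y)‖ ≤ M := by
    intro x
    rw [Lp.norm_toLp]
    refine ENNReal.toReal_le_of_le_ofReal hM0 ?_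
    have h1 := eLpNorm_le_of_ae_bound (μ := μ) (p := ⊤) (f := fun y => k x y)
      (Eventually.of_forall fun y => hkx_bdd x y)
    simpa using h1
  have hTk : ∀ n x, T n ((hkmem x).toLp (fun y => k x y)) = K (w n) x := by
    intro n x
    rw [hK, hT_apply]
    refine integral_congr_ae ?_
    filter_upwards [(hkmem x).coeFn_toLp] with y hy
    rw [hy, mul_comm]
  -- uniform bound on `K (w n)`
  have hKbdd : ∀ n x, |K (w n) x| ≤ C * M := by
    intro n x
    rw [← hTk n x, ← Real.norm_eq_abs]
    calc ‖T n ((hkmem x).toLp (fun y => k x y))‖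
        ≤ ‖T n‖ * ‖(hkmem x).toLp (fun y => k x y)‖ := (T n).le_opNorm _
      _ ≤ C * M := mul_le_mul (hC n) (hknorm x) (norm_nonneg _) hC0
  -- bound on `K w₀`
  have hK0bdd : ∀ x, |K w₀ x| ≤ M * ∫ y, ‖w₀ y‖ ∂μ := by
    intro x
    rw [hK, ← Real.norm_eq_abs]
    calc ‖∫ y in Γ, k x y * w₀ y‖ ≤ ∫ y, M * ‖w₀ y‖ ∂μ := by
          refine norm_integral_le_of_norm_le (hw₀μ.norm.const_mul M)
            (Eventually.of_forall fun y => ?_)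
          rw [norm_mul]
          exact mul_le_mul_of_nonneg_right (hkx_bdd x y) (norm_nonneg _)
      _ = M * ∫ y, ‖w₀ y‖ ∂μ := integral_const_mul _ _
  set D : ℝ := C * M + M * ∫ y, ‖w₀ y‖ ∂μ with hD
  have hD0 : 0 ≤ D := by
    have h1 : (0:ℝ) ≤ C * M := mul_nonneg hC0 hM0
    have h2 := le_trans (abs_nonneg _) (hK0bdd 0)
    linarith
  -- pointwise convergence
  have hpt : ∀ x, Tendsto (fun n => K (w n) x - K w₀ x) atTop (nhds 0) := by
    intro x
    have hφ := hweak (fun y => k x y) (hkx_meas x)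
      ⟨M, fun y => by rw [abs_of_nonneg (hk_nonneg x y)]; exact hk_bdd x y⟩
    have hcomm : ∀ v : EuclideanSpace ℝ (Fin 2) → ℝ,
        ∫ y in Γ, v y * k x y = ∫ y in Γ, k x y * v y := by
      intro v
      exact integral_congr_ae (Eventually.of_forall fun y => mul_comm _ _)
    rw [hcomm w₀] at hφ
    have h1 : Tendsto (fun n => K (w n) x) atTop (nhds (K w₀ x)) := by
      rw [hK]
      refine hφ.congr fun n => ?_
      rw [hcomm (w n), hK]
    simpa using h1.sub (tendsto_const_nhds (x := K w₀ x))
  -- measurability of `K v`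
  have hKmeas : ∀ v : EuclideanSpace ℝ (Fin 2) → ℝ, Integrable v μ →
      AEStronglyMeasurable (K v) μ := by
    intro v hv
    have h1 : AEStronglyMeasurable (fun z : EuclideanSpace ℝ (Fin 2) × EuclideanSpace ℝ (Fin 2)
        => k z.1 z.2 * v z.2) (μ.prod μ) :=
      hk_meas.aestronglyMeasurable.mul hv.1.comp_snd
    have h2 := h1.integral_prod_right'
    refine h2.congr (Eventually.of_forall fun x => ?_)
    rw [hK]
  have hcont : Continuous (fun t : ℝ => |t| ^ p) := by
    rw [continuous_iff_continuousAt]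
    intro x
    exact (Real.continuousAt_rpow_const _ p (Or.inr hp0.le)).comp
      continuous_abs.continuousAt
  have hFmeas : ∀ n, AEStronglyMeasurable (fun x => |K (w n) x - K w₀ x| ^ p) μ := by
    intro n
    exact hcont.comp_aestronglyMeasurable ((hKmeas _ (hwμ n)).sub (hKmeas _ hw₀μ))
  -- dominated convergence
  have hmain := tendsto_integral_of_dominated_convergence (μ := μ)
    (F := fun n x => |K (w n) x - K w₀ x| ^ p) (f := fun _ => (0 : ℝ))
    (fun _ => D ^ p) hFmeas (integrable_const _)
    (by
      intro n
      refine Eventually.of_forall fun x => ?_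
      rw [Real.norm_eq_abs, abs_of_nonneg (Real.rpow_nonneg (abs_nonneg _) p)]
      refine Real.rpow_le_rpow (abs_nonneg _) ?_ hp0.le
      calc |K (w n) x - K w₀ x| ≤ |K (w n) x| + |K w₀ x| := abs_sub _ _
        _ ≤ D := add_le_add (hKbdd n x) (hK0bdd x))
    (by
      refine Eventually.of_forall fun x => ?_
      have h1 := (hcont.tendsto 0).comp (hpt x)
      simpa [Function.comp_def, Real.zero_rpow hp0.ne'] using h1)
  simpa using hmain
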